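/- If M₁ and M₂ are complex square matrices with M₁ + M₁* ≥ 0 and M₂ + M₂* > 0, then I + M₁M₂ is invertible. -/

import Mathlib

open Matrix
open scoped ComplexOrder

/-- Passivity theorem, pointwise-in-frequency step: if M₁ + M₁* ≥ 0 and
M₂ + M₂* > 0, then I + M₁M₂ is invertible. -/
theorem stmt18 {n : ℕ} (M₁ M₂ : Matrix (Fin n) (Fin n) ℂ)
    (h₁ : (M₁ + M₁ᴴ).PosSemidef) (h₂ : (M₂ + M₂ᴴ).PosDef) :
    IsUnit ((1 : Matrix (Fin n) (Fin n) ℂ) + M₁ * M₂) := by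
  rw [Matrix.isUnit_iff_isUnit_det, isUnit_iff_ne_zero]
  intro hdet
  obtain ⟨v, hv, hv0⟩ := (Matrix.exists_mulVec_eq_zero_iff).2 hdet
  set y := M₂ *ᵥ v with hy
  have hMy : M₁ *ᵥ y = -v := by
    rw [Matrix.add_mulVec, Matrix.one_mulVec, ← Matrix.mulVec_mulVec] at hv0
    linear_combination (norm := module) hv0
  have hc : star y ⬝ᵥ (M₁ *ᵥ y) = -(star y ⬝ᵥ v) := by
    rw [hMy, dotProduct_neg]
  have h1 : 0 ≤ star y ⬝ᵥ ((M₁ + M₁ᴴ) *ᵥ y) := h₁.dotProduct_mulVec_nonneg y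
  have h2 : 0 < star v ⬝ᵥ ((M₂ + M₂ᴴ) *ᵥ v) := h₂.dotProduct_mulVec_pos hv
  have hconj : ∀ (M : Matrix (Fin n) (Fin n) ℂ) (x : Fin n → ℂ),
      star x ⬝ᵥ (Mᴴ *ᵥ x) = starRingEnd ℂ (star x ⬝ᵥ (M *ᵥ x)) := by
    intro M x
    simp [dotProduct, Matrix.mulVec, dotProduct, Matrix.conjTranspose_apply,
      Finset.mul_sum, Finset.sum_mul, map_sum, mul_comm, mul_assoc, mul_left_comm]
    rw [Finset.sum_comm]
  rw [Matrix.add_mulVec, dotProduct_add, hconj] at h1 h2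
  rw [hc] at h1
  have hd : star y ⬝ᵥ v = starRingEnd ℂ (star v ⬝ᵥ y) := by
    simp [dotProduct, map_sum, mul_comm]
  rw [hd] at h1
  have r1 := (Complex.le_def.mp h1).1
  have r2 := (Complex.lt_def.mp h2).1
  rw [hy] at hd
  simp [Complex.add_re, Complex.conj_re, Complex.neg_re] at r1 r2
  linarith
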